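/- Let G be a weighted directed graph on vertex set {1,…,N} with Laplacian L, and suppose G has a rooted-out branch. Then the matrix exponential semigroup is uniformly bounded: there exists η > 0 such that ‖exp(−tL)‖ ≤ η for all t ≥ 0. -/

import Mathlib

/-- The Laplacian of the weighted directed graph on `Fin N` with weights `a`. -/
def graphLaplacian {N : ℕ} (a : Fin N → Fin N → ℝ) : Matrix (Fin N) (Fin N) ℝ :=
  Matrix.of fun i j => if i = j then ∑ k ∈ Finset.univ.erase i, a i k else -(a i j)

/-- `G` has a rooted-out branch: some vertex has a directed path to every other vertex
(information flows from `j` to `i` along an edge when `a i j > 0`). -/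
def hasRootedOutBranch {N : ℕ} (a : Fin N → Fin N → ℝ) : Prop :=
  ∃ r : Fin N, ∀ v : Fin N, Relation.ReflTransGen (fun u v => 0 < a v u) r v

/-- The Euclidean norm on `ℝ^m`. -/
noncomputable def enorm' {m : Type*} [Fintype m] (v : m → ℝ) : ℝ :=
  Real.sqrt (∑ i, v i ^ 2)

open NormedSpace

private def entryHom {N : ℕ} (i j : Fin N) : Matrix (Fin N) (Fin N) ℝ →+ ℝ where
  toFun M := M i j
  map_zero' := rfl
  map_add' _ _ := rfl

private lemma exp_entry_hasSum {N : ℕ} (M : Matrix (Fin N) (Fin N) ℝ) (i j : Fin N) :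
    HasSum (fun n : ℕ => (((n.factorial : ℝ))⁻¹ • M ^ n) i j) (exp M i j) := by
  letI : SeminormedRing (Matrix (Fin N) (Fin N) ℝ) := Matrix.linftyOpSemiNormedRing
  letI : NormedRing (Matrix (Fin N) (Fin N) ℝ) := Matrix.linftyOpNormedRing
  letI : NormedAlgebra ℝ (Matrix (Fin N) (Fin N) ℝ) := Matrix.linftyOpNormedAlgebra
  have h : HasSum (fun n : ℕ => ((n.factorial : ℝ))⁻¹ • M ^ n) (exp M) := by
    rw [exp_eq_tsum ℝ]
    exact (expSeries_summable' (𝕂 := ℝ) M).hasSum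
  exact h.map (entryHom i j)
    (by show Continuous fun M : Matrix (Fin N) (Fin N) ℝ => M i j
        exact (continuous_apply j).comp (continuous_apply i))

private lemma pow_entry_nonneg {N : ℕ} {M : Matrix (Fin N) (Fin N) ℝ}
    (hM : ∀ i j, 0 ≤ M i j) (n : ℕ) : ∀ i j, 0 ≤ (M ^ n) i j := by
  induction n with
  | zero => intro i j; simp [Matrix.one_apply]; positivity
  | succ n ih =>
      intro i j
      rw [pow_succ, Matrix.mul_apply]
      exact Finset.sum_nonneg fun k _ => mul_nonneg (ih i k) (hM k j)

private lemma exp_entry_nonneg {N : ℕ} {M : Matrix (Fin N) (Fin N) ℝ}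
    (hM : ∀ i j, 0 ≤ M i j) (i j : Fin N) : 0 ≤ exp M i j := by
  have h := exp_entry_hasSum M i j
  refine h.nonneg fun n => ?_
  have h1 : (0:ℝ) ≤ ((n.factorial : ℝ))⁻¹ := by positivity
  have h2 := pow_entry_nonneg hM n i j
  calc (0:ℝ) ≤ ((n.factorial : ℝ))⁻¹ * (M ^ n) i j := mul_nonneg h1 h2
    _ = (((n.factorial : ℝ))⁻¹ • M ^ n) i j := by simp

/-- Entries of `exp M` are nonnegative for any "Metzler-shifted" matrix of the form
`B - c • 1` with `B` entrywise nonnegative. -/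
private lemma exp_entry_nonneg_of_shift {N : ℕ} (M : Matrix (Fin N) (Fin N) ℝ) (c : ℝ)
    (h : ∀ i j, 0 ≤ (M + c • (1 : Matrix (Fin N) (Fin N) ℝ)) i j) :
    ∀ i j, 0 ≤ exp M i j := by
  intro i j
  set B := M + c • (1 : Matrix (Fin N) (Fin N) ℝ) with hB
  have hM : M = B + (-c) • (1 : Matrix (Fin N) (Fin N) ℝ) := by
    rw [hB, neg_smul, add_neg_cancel_right]
  have hcomm : Commute B ((-c) • (1 : Matrix (Fin N) (Fin N) ℝ)) :=
    (Commute.one_right B).smul_right _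
  have hsmul : (-c) • (1 : Matrix (Fin N) (Fin N) ℝ)
      = algebraMap ℝ (Matrix (Fin N) (Fin N) ℝ) (-c) := by
    rw [Algebra.algebraMap_eq_smul_one]
  have hexp1 : exp ((-c) • (1 : Matrix (Fin N) (Fin N) ℝ))
      = Real.exp (-c) • (1 : Matrix (Fin N) (Fin N) ℝ) := by
    letI : SeminormedRing (Matrix (Fin N) (Fin N) ℝ) := Matrix.linftyOpSemiNormedRing
    letI : NormedRing (Matrix (Fin N) (Fin N) ℝ) := Matrix.linftyOpNormedRing
    letI : NormedAlgebra ℝ (Matrix (Fin N) (Fin N) ℝ) := Matrix.linftyOpNormedAlgebra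
    rw [hsmul]
    have := algebraMap_exp_comm (𝕂 := ℝ) (𝔸 := Matrix (Fin N) (Fin N) ℝ) (-c)
    rw [← Real.exp_eq_exp_ℝ, Algebra.algebraMap_eq_smul_one] at this
    exact this.symm
  have key : exp M = Real.exp (-c) • exp B := by
    rw [hM, Matrix.exp_add_of_commute _ _ hcomm, hexp1, Matrix.mul_smul, mul_one]
  rw [key]
  have := exp_entry_nonneg (M := B) h i j
  simpa using mul_nonneg (Real.exp_nonneg _) this

private lemma rowsum_pow_succ {N : ℕ} {M : Matrix (Fin N) (Fin N) ℝ}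
    (h : ∀ i, ∑ j, M i j = 0) (n : ℕ) (i : Fin N) : ∑ j, (M ^ (n + 1)) i j = 0 := by
  rw [pow_succ]
  calc ∑ j, (M ^ n * M) i j = ∑ j, ∑ k, (M ^ n) i k * M k j := by
        simp [Matrix.mul_apply]
    _ = ∑ k, (M ^ n) i k * ∑ j, M k j := by
        rw [Finset.sum_comm]; simp [Finset.mul_sum]
    _ = 0 := by simp [h]

private lemma exp_rowsum_one {N : ℕ} {M : Matrix (Fin N) (Fin N) ℝ}
    (h : ∀ i, ∑ j, M i j = 0) (i : Fin N) : ∑ j, exp M i j = 1 := by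
  have hs : HasSum (fun n : ℕ => ∑ j, (((n.factorial : ℝ))⁻¹ • M ^ n) i j)
      (∑ j, exp M i j) := hasSum_sum fun j _ => exp_entry_hasSum M i j
  have heq : (fun n : ℕ => ∑ j, (((n.factorial : ℝ))⁻¹ • M ^ n) i j)
      = fun n => if n = 0 then (1 : ℝ) else 0 := by
    funext n
    cases n with
    | zero => simp [Matrix.one_apply]
    | succ n =>
        simp only [Matrix.smul_apply, smul_eq_mul, ← Finset.mul_sum,
          rowsum_pow_succ h n i]
        simp
  rw [heq] at hs
  have h1 : HasSum (fun n : ℕ => if n = 0 then (1 : ℝ) else 0) 1 := by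
    have := hasSum_ite_eq (0 : ℕ) (1 : ℝ)
    simpa [eq_comm] using this
  exact hs.unique h1

/-- if `G` has a rooted-out branch, the semigroup `exp(−tL)` is uniformly
bounded in the operator norm induced by the Euclidean norm: there exists `η > 0` with
`‖exp(−tL)‖ ≤ η` for all `t ≥ 0`. -/
theorem exp_neg_laplacian_uniformly_bounded
    (N : ℕ) (a : Fin N → Fin N → ℝ) (ha : ∀ i j, 0 ≤ a i j)
    (L : Matrix (Fin N) (Fin N) ℝ) (hL : L = graphLaplacian a)
    (hroot : hasRootedOutBranch a) :
    ∃ η > (0 : ℝ), ∀ t : ℝ, 0 ≤ t → ∀ x : Fin N → ℝ,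
      enorm' ((NormedSpace.exp ((-t) • L)).mulVec x) ≤ η * enorm' x := by
  refine ⟨Real.sqrt N + 1, by positivity, fun t ht x => ?_⟩
  set M : Matrix (Fin N) (Fin N) ℝ := (-t) • L with hM
  -- diagonal entries of L are nonnegative, off-diagonal nonpositive, zero row sums
  have hLdiag : ∀ i, 0 ≤ L i i := by
    intro i
    rw [hL]
    simp only [graphLaplacian, Matrix.of_apply, if_pos rfl]
    exact Finset.sum_nonneg fun k _ => ha i k
  have hLoff : ∀ i j, i ≠ j → L i j = -(a i j) := by
    intro i j hij
    rw [hL]; simp [graphLaplacian, hij]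
  have hrow : ∀ i, ∑ j, M i j = 0 := by
    intro i
    have hLrow : ∑ j, L i j = 0 := by
      rw [← Finset.add_sum_erase _ _ (Finset.mem_univ i)]
      have h1 : ∑ j ∈ Finset.univ.erase i, L i j
          = ∑ j ∈ Finset.univ.erase i, -(a i j) := by
        refine Finset.sum_congr rfl fun j hj => hLoff i j ?_
        exact fun h => (Finset.mem_erase.mp hj).1 h.symm
      have h2 : L i i = ∑ k ∈ Finset.univ.erase i, a i k := by
        rw [hL]; simp [graphLaplacian]
      rw [h1, h2, Finset.sum_neg_distrib]
      ring
    simp [hM, Matrix.smul_apply, ← Finset.mul_sum, hLrow]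
  -- nonnegativity of entries of exp M
  have hnn : ∀ i j, 0 ≤ exp M i j := by
    refine exp_entry_nonneg_of_shift M (∑ k, t * L k k) fun i j => ?_
    rcases eq_or_ne i j with rfl | hij
    · simp only [Matrix.add_apply, Matrix.smul_apply, Matrix.one_apply_eq, smul_eq_mul,
        mul_one, hM]
      have h1 : t * L i i ≤ ∑ k, t * L k k :=
        Finset.single_le_sum (fun k _ => mul_nonneg ht (hLdiag k)) (Finset.mem_univ i)
      nlinarith [h1]
    · simp only [Matrix.add_apply, Matrix.smul_apply, Matrix.one_apply_ne hij, smul_eq_mul,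
        mul_zero, add_zero, hM]
      rw [hLoff i j hij]
      have := mul_nonneg ht (ha i j)
      nlinarith
  have hrs : ∀ i, ∑ j, exp M i j = 1 := exp_rowsum_one hrow
  -- pointwise bound on entries of the result
  set P := exp M with hP
  have hx : ∀ j, |x j| ≤ enorm' x := by
    intro j
    rw [← Real.sqrt_sq_eq_abs]
    exact Real.sqrt_le_sqrt (Finset.single_le_sum (fun k _ => sq_nonneg (x k))
      (Finset.mem_univ j))
  have hxnn : 0 ≤ enorm' x := Real.sqrt_nonneg _
  have hbound : ∀ i, |(P.mulVec x) i| ≤ enorm' x := by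
    intro i
    rw [Matrix.mulVec, dotProduct]
    calc |∑ j, P i j * x j| ≤ ∑ j, |P i j * x j| := Finset.abs_sum_le_sum_abs _ _
      _ ≤ ∑ j, P i j * enorm' x := by
          refine Finset.sum_le_sum fun j _ => ?_
          rw [abs_mul, abs_of_nonneg (hnn i j)]
          exact mul_le_mul_of_nonneg_left (hx j) (hnn i j)
      _ = (∑ j, P i j) * enorm' x := by rw [Finset.sum_mul]
      _ = enorm' x := by rw [hrs i, one_mul]
  have hsum : ∑ i, ((P.mulVec x) i) ^ 2 ≤ (N : ℝ) * (enorm' x) ^ 2 := by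
    calc ∑ i, ((P.mulVec x) i) ^ 2 ≤ ∑ _i : Fin N, (enorm' x) ^ 2 := by
          refine Finset.sum_le_sum fun i _ => ?_
          nlinarith [hbound i, abs_nonneg ((P.mulVec x) i), sq_abs ((P.mulVec x) i), hxnn]
      _ = (N : ℝ) * (enorm' x) ^ 2 := by simp [Finset.sum_const, mul_comm]
  have : enorm' (P.mulVec x) ≤ Real.sqrt N * enorm' x := by
    rw [enorm']
    calc Real.sqrt (∑ i, ((P.mulVec x) i) ^ 2) ≤ Real.sqrt ((N : ℝ) * (enorm' x) ^ 2) :=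
          Real.sqrt_le_sqrt hsum
      _ = Real.sqrt N * enorm' x := by
          rw [Real.sqrt_mul (Nat.cast_nonneg N), Real.sqrt_sq hxnn]
  calc enorm' (P.mulVec x) ≤ Real.sqrt N * enorm' x := this
    _ ≤ (Real.sqrt N + 1) * enorm' x := by nlinarith [Real.sqrt_nonneg (N : ℝ)]
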